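/- Let n ≥ 1, 1 ≤ m < 2^{n/2}, and a ≥ 0 be integers. Let R = 𝒳 × 𝒴 ⊆ {0,1}^{nm+a} × {0,1}^{nm+a} be a rectangle of size at least 2^{2nm+2a−m+2}, where each element of 𝒳 (resp. 𝒴) is interpreted as a pair (X, t_x) (resp. (Y, t_y)) with (X,Y) an instance of XOR-Missing-String(n,m) and t_x, t_y ∈ {0,1}^a auxiliary strings. Let s ∈ {0,1}^n be any string. Then there exists a subrectangle R' of R of size at least 2^{−2n−2}·|R| such that for every ((X,t_x),(Y,t_y)) ∈ R', s is not a solution to XOR-Missing-String on (X,Y). -/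

import Mathlib

lemma avoid_card_le (n m a : ℕ) (g : (Fin n → Bool) → (Fin n → Bool))
    (hg : Function.Injective g)
    (U : Finset (Fin n → Bool)) (𝒵 : Finset ((Fin m → Fin n → Bool) × (Fin a → Bool))) :
    (𝒵.filter (fun Z => ∀ i, g (Z.1 i) ∉ U)).card ≤ (Finset.univ \ U).card ^ m * 2 ^ a := by
  classical
  have h1 : (𝒵.filter (fun Z => ∀ i, g (Z.1 i) ∉ U)).card ≤
      ((Fintype.piFinset (fun _ : Fin m => (Finset.univ \ U : Finset (Fin n → Bool)))) ×ˢ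
        (Finset.univ : Finset (Fin a → Bool))).card := by
    apply Finset.card_le_card_of_injOn (fun Z => (fun i => g (Z.1 i), Z.2))
    · intro Z hZ
      simp only [Finset.mem_coe, Finset.mem_filter] at hZ
      simp only [Finset.mem_coe, Finset.mem_product, Fintype.mem_piFinset, Finset.mem_sdiff, Finset.mem_univ,
        true_and, and_true]
      exact fun i => hZ.2 i
    · intro Z1 _ Z2 _ h
      simp only [Prod.mk.injEq] at h
      obtain ⟨h1, h2⟩ := h
      have : Z1.1 = Z2.1 := by
        funext i
        exact hg (congrFun h1 i)
      exact Prod.ext this h2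
  calc _ ≤ _ := h1
    _ = (Finset.univ \ U).card ^ m * 2 ^ a := by
        rw [Finset.card_product, Fintype.card_piFinset]
        simp [Finset.prod_const]

lemma side_bound (n m a : ℕ) (hn : 1 ≤ n)
    (g : (Fin n → Bool) → (Fin n → Bool)) (hg : Function.Injective g)
    (𝒵 : Finset ((Fin m → Fin n → Bool) × (Fin a → Bool)))
    (U : Finset (Fin n → Bool)) (hU : 2 ^ (n - 1) ≤ U.card)
    (h : ∀ u ∈ U, (𝒵.filter (fun Z => ∃ i, g (Z.1 i) = u)).card * 2 ^ (n + 1) ≤ 𝒵.card) :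
    𝒵.card ≤ 2 ^ ((n - 1) * m + a + 1) := by
  classical
  have havoid := avoid_card_le n m a g hg U 𝒵
  set A := 𝒵.filter (fun Z => ∀ i, g (Z.1 i) ∉ U) with hA
  set B := 𝒵.filter (fun Z => ¬ ∀ i, g (Z.1 i) ∉ U) with hB
  have hsplit : A.card + B.card = 𝒵.card := Finset.card_filter_add_card_filter_not _
  have hBsub : B ⊆ U.biUnion (fun u => 𝒵.filter (fun Z => ∃ i, g (Z.1 i) = u)) := by
    intro Z hZ
    simp only [hB, Finset.mem_filter, not_forall, not_not] at hZ
    obtain ⟨hZ𝒵, i, hi⟩ := hZ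
    simp only [Finset.mem_biUnion, Finset.mem_filter]
    exact ⟨g (Z.1 i), hi, hZ𝒵, i, rfl⟩
  have hBcard : B.card ≤ ∑ u ∈ U, (𝒵.filter (fun Z => ∃ i, g (Z.1 i) = u)).card :=
    le_trans (Finset.card_le_card hBsub) (Finset.card_biUnion_le)
  have hUcard : U.card ≤ 2 ^ n := by
    calc U.card ≤ (Finset.univ : Finset (Fin n → Bool)).card := Finset.card_le_univ U
      _ = 2 ^ n := by simp
  have hB2 : B.card * 2 ^ (n + 1) ≤ 2 ^ n * 𝒵.card := by
    calc B.card * 2 ^ (n + 1) ≤ (∑ u ∈ U, (𝒵.filter (fun Z => ∃ i, g (Z.1 i) = u)).card) * 2 ^ (n + 1) :=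
          Nat.mul_le_mul_right _ hBcard
      _ = ∑ u ∈ U, (𝒵.filter (fun Z => ∃ i, g (Z.1 i) = u)).card * 2 ^ (n + 1) := by
          rw [Finset.sum_mul]
      _ ≤ ∑ u ∈ U, 𝒵.card := Finset.sum_le_sum h
      _ = U.card * 𝒵.card := by rw [Finset.sum_const, smul_eq_mul]
      _ ≤ 2 ^ n * 𝒵.card := Nat.mul_le_mul_right _ hUcard
  have hB3 : B.card * 2 ≤ 𝒵.card := by
    have := hB2
    rw [pow_succ] at this
    have h2 : 2 ^ n * (B.card * 2) ≤ 2 ^ n * 𝒵.card := by ring_nf at this ⊢; linarith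
    exact Nat.le_of_mul_le_mul_left h2 (Nat.pow_pos (by norm_num))
  have hcompl : (Finset.univ \ U).card ≤ 2 ^ (n - 1) := by
    have hcard : (Finset.univ \ U).card = 2 ^ n - U.card := by
      rw [Finset.card_sdiff_of_subset (Finset.subset_univ U)]
      simp
    have h2n : 2 ^ n = 2 ^ (n - 1) * 2 := by
      rw [← pow_succ]
      congr 1
      omega
    omega
  have hAcard : A.card ≤ 2 ^ ((n - 1) * m + a) := by
    calc A.card ≤ (Finset.univ \ U).card ^ m * 2 ^ a := havoid
      _ ≤ (2 ^ (n - 1)) ^ m * 2 ^ a :=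
          Nat.mul_le_mul_right _ (Nat.pow_le_pow_left hcompl m)
      _ = 2 ^ ((n - 1) * m + a) := by rw [← pow_mul, ← pow_add]
  have : 2 ^ ((n - 1) * m + a + 1) = 2 ^ ((n - 1) * m + a) * 2 := by rw [pow_succ]
  omega

/-- Rectangle lower bound for XOR-Missing-String with auxiliary inputs: each element of the
rectangle is a pair of an XOR-Missing-String list and an `a`-bit auxiliary string. -/
theorem stmt3 (n m a : ℕ) (hn : 1 ≤ n) (hm : 1 ≤ m)
    (hm2 : (m : ℝ) < (2 : ℝ) ^ ((n : ℝ) / 2))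
    (𝒳 𝒴 : Finset ((Fin m → Fin n → Bool) × (Fin a → Bool)))
    (hsize : (2 : ℕ) ^ (2 * n * m + 2 * a - m + 2) ≤ 𝒳.card * 𝒴.card)
    (s : Fin n → Bool) :
    ∃ 𝒳' 𝒴' : Finset ((Fin m → Fin n → Bool) × (Fin a → Bool)),
      𝒳' ⊆ 𝒳 ∧ 𝒴' ⊆ 𝒴 ∧
      ((𝒳.card : ℝ) * (𝒴.card : ℝ)) / 2 ^ (2 * n + 2) ≤ (𝒳'.card : ℝ) * (𝒴'.card : ℝ) ∧
      ∀ X ∈ 𝒳', ∀ Y ∈ 𝒴', ∃ i j : Fin m, s = fun t => Bool.xor (X.1 i t) (Y.1 j t) := by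
  classical
  set gX : (Fin n → Bool) → (Fin n → Bool) := fun v => v with hgX
  set gY : (Fin n → Bool) → (Fin n → Bool) := fun v => fun t => Bool.xor (s t) (v t) with hgY
  have hgXinj : Function.Injective gX := fun _ _ h => h
  have hgYinj : Function.Injective gY := by
    intro v w h
    funext t
    have ht := congrFun h t
    simp only [hgY] at ht
    cases hs : s t <;> cases hv : v t <;> cases hw : w t <;> simp_all
  set Xf : (Fin n → Bool) → Finset ((Fin m → Fin n → Bool) × (Fin a → Bool)) :=
    fun u => 𝒳.filter (fun Z => ∃ i, gX (Z.1 i) = u) with hXf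
  set Yf : (Fin n → Bool) → Finset ((Fin m → Fin n → Bool) × (Fin a → Bool)) :=
    fun u => 𝒴.filter (fun Z => ∃ i, gY (Z.1 i) = u) with hYf
  -- key claim
  have key : ∃ u : Fin n → Bool,
      ((𝒳.card : ℝ) * (𝒴.card : ℝ)) / 2 ^ (2 * n + 2) ≤ ((Xf u).card : ℝ) * ((Yf u).card : ℝ) := by
    by_contra hcon
    push_neg at hcon
    -- per-u natural number inequality
    have hnat : ∀ u : Fin n → Bool,
        (Xf u).card * (Yf u).card * 2 ^ (2 * n + 2) < 𝒳.card * 𝒴.card := by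
      intro u
      have h2 : (0 : ℝ) < 2 ^ (2 * n + 2) := by positivity
      have hr : ((Xf u).card : ℝ) * ((Yf u).card : ℝ) * 2 ^ (2 * n + 2) <
          (𝒳.card : ℝ) * 𝒴.card := (lt_div_iff₀ h2).mp (hcon u)
      exact_mod_cast hr
    -- per-u disjunction
    have hdisj : ∀ u : Fin n → Bool,
        (Xf u).card * 2 ^ (n + 1) ≤ 𝒳.card ∨ (Yf u).card * 2 ^ (n + 1) ≤ 𝒴.card := by
      intro u
      by_contra hc
      push_neg at hc
      obtain ⟨h1, h2⟩ := hc
      have hmul : 𝒳.card * 𝒴.card < ((Xf u).card * 2 ^ (n + 1)) * ((Yf u).card * 2 ^ (n + 1)) :=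
        Nat.mul_lt_mul_of_lt_of_lt h1 h2
      have heq : ((Xf u).card * 2 ^ (n + 1)) * ((Yf u).card * 2 ^ (n + 1)) =
          (Xf u).card * (Yf u).card * 2 ^ (2 * n + 2) := by
        rw [show 2 * n + 2 = (n + 1) + (n + 1) by omega, pow_add]
        ring
      rw [heq] at hmul
      exact absurd (hnat u) (by omega)
    -- split universe
    set UX : Finset (Fin n → Bool) :=
      Finset.univ.filter (fun u => (Xf u).card * 2 ^ (n + 1) ≤ 𝒳.card) with hUX
    set UY : Finset (Fin n → Bool) :=
      Finset.univ.filter (fun u => ¬ ((Xf u).card * 2 ^ (n + 1) ≤ 𝒳.card)) with hUY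
    have hsum : UX.card + UY.card = 2 ^ n := by
      rw [hUX, hUY, Finset.card_filter_add_card_filter_not]
      simp
    have hnm : m ≤ n * m := Nat.le_mul_of_pos_left m (by omega)
    -- common lower bound on cards
    have hTcard : Fintype.card ((Fin m → Fin n → Bool) × (Fin a → Bool)) = 2 ^ (n * m + a) := by
      simp [pow_add, pow_mul]
    have hXle : 𝒳.card ≤ 2 ^ (n * m + a) := by
      calc 𝒳.card ≤ Fintype.card _ := Finset.card_le_univ 𝒳
        _ = 2 ^ (n * m + a) := hTcard
    have hYle : 𝒴.card ≤ 2 ^ (n * m + a) := by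
      calc 𝒴.card ≤ Fintype.card _ := Finset.card_le_univ 𝒴
        _ = 2 ^ (n * m + a) := hTcard
    have h2nm : 2 * n * m = n * m + n * m := by ring
    have hXlow : 2 ^ (n * m - m + a + 2) ≤ 𝒳.card := by
      have h1 : 2 ^ (n * m - m + a + 2) * 2 ^ (n * m + a) ≤ 𝒳.card * 2 ^ (n * m + a) := by
        calc 2 ^ (n * m - m + a + 2) * 2 ^ (n * m + a) = 2 ^ (2 * n * m + 2 * a - m + 2) := by
              rw [← pow_add]; congr 1; omega
          _ ≤ 𝒳.card * 𝒴.card := hsize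
          _ ≤ 𝒳.card * 2 ^ (n * m + a) := Nat.mul_le_mul_left _ hYle
      exact Nat.le_of_mul_le_mul_right h1 (Nat.pow_pos (by norm_num))
    have hYlow : 2 ^ (n * m - m + a + 2) ≤ 𝒴.card := by
      have h1 : 2 ^ (n * m + a) * 2 ^ (n * m - m + a + 2) ≤ 2 ^ (n * m + a) * 𝒴.card := by
        calc 2 ^ (n * m + a) * 2 ^ (n * m - m + a + 2) = 2 ^ (2 * n * m + 2 * a - m + 2) := by
              rw [← pow_add]; congr 1; omega
          _ ≤ 𝒳.card * 𝒴.card := hsize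
          _ ≤ 2 ^ (n * m + a) * 𝒴.card := Nat.mul_le_mul_right _ hXle
      exact Nat.le_of_mul_le_mul_left h1 (Nat.pow_pos (by norm_num))
    have hpow : 2 ^ ((n - 1) * m + a + 1) < 2 ^ (n * m - m + a + 2) := by
      apply Nat.pow_lt_pow_right (by norm_num)
      have : (n - 1) * m = n * m - m := by
        rw [Nat.sub_one_mul]
      omega
    rcases (show 2 ^ (n - 1) ≤ UX.card ∨ 2 ^ (n - 1) ≤ UY.card by
        have h2n : 2 ^ n = 2 ^ (n - 1) * 2 := by
          rw [← pow_succ]; congr 1; omega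
        omega) with hbig | hbig
    · have := side_bound n m a hn gX hgXinj 𝒳 UX hbig (by
        intro u hu
        simp only [hUX, Finset.mem_filter] at hu
        exact hu.2)
      omega
    · have := side_bound n m a hn gY hgYinj 𝒴 UY hbig (by
        intro u hu
        simp only [hUY, Finset.mem_filter] at hu
        rcases hdisj u with h | h
        · exact absurd h hu.2
        · exact h)
      omega
  obtain ⟨u, hu⟩ := key
  refine ⟨Xf u, Yf u, Finset.filter_subset _ _, Finset.filter_subset _ _, hu, ?_⟩
  intro X hX Y hY
  simp only [hXf, hYf, Finset.mem_filter] at hX hY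
  obtain ⟨_, i, hi⟩ := hX
  obtain ⟨_, j, hj⟩ := hY
  refine ⟨i, j, ?_⟩
  funext t
  have h1 : X.1 i t = u t := congrFun hi t
  have h2 : Bool.xor (s t) (Y.1 j t) = u t := congrFun hj t
  rw [h1, ← h2]
  cases s t <;> cases Y.1 j t <;> rfl
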